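/- arXiv:2205.12550 — 2 statements merged into one kernel-verified Lean document; each statement's English description precedes it below -/
import Mathlib

section
/- Let f : ℝ^{d_x} → ℝ^{d_x} and h : ℝ^{d_x} → ℝ^{d_y} be continuous, let D be a real d_z × d_z matrix and F a real d_z × d_y matrix, and let A ⊆ ℝ^{d_x}. Suppose T : ℝ^{d_x} → ℝ^{d_z} is differentiable and satisfies the observer PDE: the derivative of T at x applied to f(x) equals D T(x) + F h(x), for every x ∈ A. Let x : [0, ∞) → ℝ^{d_x} be differentiable with ẋ(t) = f(x(t)) and x(t) ∈ A for all t ≥ 0, and let z : [0, ∞) → ℝ^{d_z} be differentiable with ż(t) = D z(t) + F h(x(t)) for all t ≥ 0. Then the error e(t) := z(t) − T(x(t)) satisfies the linear differential equation ė(t) = D e(t) for all t ≥ 0, and hence e(t) = exp(tD) e(0) for all t ≥ 0. -/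
open Matrix

open NormedSpace in
private lemma entry_exp_hasDerivAt {n : ℕ} (D : Matrix (Fin n) (Fin n) ℝ)
    (i j : Fin n) (t : ℝ) :
    HasDerivAt (fun s : ℝ => exp (s • D) i j) ((D * exp (t • D)) i j) t := by
  letI : SeminormedRing (Matrix (Fin n) (Fin n) ℝ) := Matrix.linftyOpSemiNormedRing
  letI : NormedRing (Matrix (Fin n) (Fin n) ℝ) := Matrix.linftyOpNormedRing
  letI : NormedAlgebra ℝ (Matrix (Fin n) (Fin n) ℝ) := Matrix.linftyOpNormedAlgebra
  letI : CompleteSpace (Matrix (Fin n) (Fin n) ℝ) := FiniteDimensional.complete ℝ _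
  have h := hasDerivAt_exp_smul_const' (𝕂 := ℝ) D t
  let L : Matrix (Fin n) (Fin n) ℝ →ₗ[ℝ] ℝ := Matrix.entryLinearMap ℝ ℝ i j
  have := (L.toContinuousLinearMap.hasFDerivAt).comp_hasDerivAt t h
  exact this

open NormedSpace in
private lemma exp_comm {n : ℕ} (D : Matrix (Fin n) (Fin n) ℝ) (t : ℝ) :
    D * exp (t • D) = exp (t • D) * D := by
  letI : SeminormedRing (Matrix (Fin n) (Fin n) ℝ) := Matrix.linftyOpSemiNormedRing
  letI : NormedRing (Matrix (Fin n) (Fin n) ℝ) := Matrix.linftyOpNormedRing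
  letI : NormedAlgebra ℝ (Matrix (Fin n) (Fin n) ℝ) := Matrix.linftyOpNormedAlgebra
  letI : CompleteSpace (Matrix (Fin n) (Fin n) ℝ) := FiniteDimensional.complete ℝ _
  exact (hasDerivAt_exp_smul_const' (𝕂 := ℝ) D t).unique
    (hasDerivAt_exp_smul_const (𝕂 := ℝ) D t)

open NormedSpace in
private lemma exp_mul_exp_neg {n : ℕ} (D : Matrix (Fin n) (Fin n) ℝ) (t : ℝ) :
    exp (t • D) * exp ((-t) • D) = 1 := by
  rw [neg_smul, ← Matrix.exp_add_of_commute (t • D) (-(t • D)) (Commute.neg_right rfl),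
    add_neg_cancel, NormedSpace.exp_zero]

/-- **Observer error dynamics.** If `T` satisfies the observer PDE
`(∂T/∂x)(x) f(x) = D T(x) + F h(x)` on a set `A`, `x` solves `ẋ = f(x)` staying in `A`,
and `z` solves `ż = D z + F h(x(t))`, then the error `e = z - T ∘ x` satisfies
`ė = D e` and hence `e(t) = exp(t D) e(0)` for all `t ≥ 0`. -/
theorem observer_error_linear_ode
    (dx dy dz : ℕ)
    (f : (Fin dx → ℝ) → Fin dx → ℝ) (h : (Fin dx → ℝ) → Fin dy → ℝ)
    (hf : Continuous f) (hh : Continuous h)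
    (D : Matrix (Fin dz) (Fin dz) ℝ) (F : Matrix (Fin dz) (Fin dy) ℝ)
    (A : Set (Fin dx → ℝ))
    (T : (Fin dx → ℝ) → Fin dz → ℝ) (hT : Differentiable ℝ T)
    (hPDE : ∀ x ∈ A, fderiv ℝ T x (f x) = D.mulVec (T x) + F.mulVec (h x))
    (x : ℝ → Fin dx → ℝ) (hx : ∀ t : ℝ, 0 ≤ t → HasDerivAt x (f (x t)) t)
    (hxA : ∀ t : ℝ, 0 ≤ t → x t ∈ A)
    (z : ℝ → Fin dz → ℝ)
    (hz : ∀ t : ℝ, 0 ≤ t → HasDerivAt z (D.mulVec (z t) + F.mulVec (h (x t))) t)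
    (e : ℝ → Fin dz → ℝ) (he : ∀ t, e t = z t - T (x t)) :
    (∀ t : ℝ, 0 ≤ t → HasDerivAt e (D.mulVec (e t)) t) ∧
    (∀ t : ℝ, 0 ≤ t → e t = (NormedSpace.exp (t • D)).mulVec (e 0)) := by
  have he' : e = fun t => z t - T (x t) := funext he
  have hderiv : ∀ t : ℝ, 0 ≤ t → HasDerivAt e (D.mulVec (e t)) t := by
    intro t ht
    have hTx : HasDerivAt (fun s => T (x s)) (fderiv ℝ T (x t) (f (x t))) t :=
      (hT (x t)).hasFDerivAt.comp_hasDerivAt t (hx t ht)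
    rw [hPDE (x t) (hxA t ht)] at hTx
    have := (hz t ht).sub hTx
    rw [he']
    refine this.congr_deriv (Eq.symm ?_)
    show D *ᵥ (z t - T (x t)) = _
    rw [Matrix.mulVec_sub]
    abel
  refine ⟨hderiv, fun t ht => ?_⟩
  -- consider g s = exp((-s) • D) *ᵥ e s ; it is constant on [0, t]
  set g : ℝ → Fin dz → ℝ := fun s => (NormedSpace.exp ((-s) • D)).mulVec (e s) with hg
  have hgderiv : ∀ s : ℝ, 0 ≤ s → HasDerivAt g 0 s := by
    intro s hs
    rw [hasDerivAt_pi]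
    intro i
    have hecomp : ∀ j, HasDerivAt (fun u => e u j) (D.mulVec (e s) j) s :=
      fun j => hasDerivAt_pi.1 (hderiv s hs) j
    have hEntry : ∀ i' j, HasDerivAt (fun u : ℝ => NormedSpace.exp ((-u) • D) i' j)
        (-((D * NormedSpace.exp ((-s) • D)) i' j)) s := by
      intro i' j
      have h1 := entry_exp_hasDerivAt D i' j (-s)
      have h2 : HasDerivAt (fun u : ℝ => -u) (-1) s := (hasDerivAt_id s).neg
      have := h1.comp s h2
      simpa [Function.comp_def, neg_smul, Matrix.neg_apply] using this
    have hcomp : ∀ j, HasDerivAt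
        (fun u : ℝ => NormedSpace.exp ((-u) • D) i j * e u j)
        (-((D * NormedSpace.exp ((-s) • D)) i j) * e s j
          + NormedSpace.exp ((-s) • D) i j * D.mulVec (e s) j) s :=
      fun j => (hEntry i j).mul (hecomp j)
    have hsum := HasDerivAt.sum (u := Finset.univ) (fun j _ => hcomp j)
    have hfun : (fun u : ℝ => ∑ j, NormedSpace.exp ((-u) • D) i j * e u j)
        = fun u => g u i := by
      funext u
      simp [hg, Matrix.mulVec, dotProduct]
    simp only [Finset.sum_fn] at hsum
    rw [hfun] at hsum
    convert hsum using 1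
    have hcm := exp_comm D (-s)
    have : ∑ j, (-((D * NormedSpace.exp ((-s) • D)) i j) * e s j
        + NormedSpace.exp ((-s) • D) i j * D.mulVec (e s) j)
        = -(((D * NormedSpace.exp ((-s) • D)).mulVec (e s)) i)
          + ((NormedSpace.exp ((-s) • D)).mulVec (D.mulVec (e s))) i := by
      simp [Matrix.mulVec, dotProduct, Finset.sum_add_distrib, Finset.sum_neg_distrib]
    rw [this, Matrix.mulVec_mulVec, hcm]
    simp
  have hconst : g t = g 0 := by
    have hcont : ContinuousOn g (Set.Icc 0 t) := fun s hs =>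
      ((hgderiv s hs.1).continuousAt).continuousWithinAt
    have := constant_of_has_deriv_right_zero hcont
      (fun s hs => ((hgderiv s hs.1).hasDerivWithinAt))
    exact this t (Set.mem_Icc.2 ⟨ht, le_refl t⟩)
  have hg0 : g 0 = e 0 := by
    simp [hg]
  have hE : (NormedSpace.exp (t • D)).mulVec (g t) = e t := by
    rw [hg, Matrix.mulVec_mulVec, exp_mul_exp_neg, Matrix.one_mulVec]
  rw [← hE, hconst, hg0]
end

section
/- Let f : ℝ^{d_x} → ℝ^{d_x} and h : ℝ^{d_x} → ℝ^{d_y} be continuous, let D be a real d_z × d_z matrix that is diagonalizable over ℂ with all complex eigenvalues λ₁, …, λ_{d_z} having negative real part, let F be a real d_z × d_y matrix, and let A ⊆ ℝ^{d_x}. Suppose T : ℝ^{d_x} → ℝ^{d_z} is differentiable and satisfies, for every x ∈ A, that the derivative of T at x applied to f(x) equals D T(x) + F h(x). Let x : [0, ∞) → ℝ^{d_x} be differentiable with ẋ(t) = f(x(t)) and x(t) ∈ A for all t ≥ 0, and let z : [0, ∞) → ℝ^{d_z} be differentiable with ż(t) = D z(t) + F h(x(t)) for all t ≥ 0. Then there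 exists M > 0 such that for all t ≥ 0, ‖z(t) − T(x(t))‖ ≤ M ‖z(0) − T(x(0))‖ e^{−λ_min t}, where λ_min = min_i |Re λ_i|. -/
open Matrix

/-- The Euclidean norm on `Fin n → ℝ`. -/
noncomputable def euclNorm {n : ℕ} (v : Fin n → ℝ) : ℝ :=
  ‖(WithLp.equiv 2 (Fin n → ℝ)).symm v‖

section Aux

open NormedSpace Polynomial

attribute [local instance] Matrix.linftyOpNormedAddCommGroup Matrix.linftyOpNormedRing
  Matrix.linftyOpNormedAlgebra

theorem KKL.euclNorm_eq {n : ℕ} (v : Fin n → ℝ) :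
    euclNorm v = Real.sqrt (∑ i, (v i) ^ 2) := by
  rw [euclNorm, EuclideanSpace.norm_eq]
  congr 1
  refine Finset.sum_congr rfl fun i _ => ?_
  rw [WithLp.equiv_symm_apply, PiLp.toLp_apply, Real.norm_eq_abs, sq_abs]

theorem KKL.norm_le_euclNorm {n : ℕ} (v : Fin n → ℝ) : ‖v‖ ≤ euclNorm v := by
  refine (pi_norm_le_iff_of_nonneg (by rw [KKL.euclNorm_eq]; positivity)).mpr fun i => ?_
  rw [KKL.euclNorm_eq, Real.norm_eq_abs, ← Real.sqrt_sq_eq_abs]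
  exact Real.sqrt_le_sqrt (Finset.single_le_sum (fun j _ => sq_nonneg (v j)) (Finset.mem_univ i))

theorem KKL.euclNorm_le_norm {n : ℕ} (v : Fin n → ℝ) :
    euclNorm v ≤ Real.sqrt n * ‖v‖ := by
  rw [KKL.euclNorm_eq]
  have h1 : ∑ i, (v i) ^ 2 ≤ n * ‖v‖ ^ 2 := by
    calc ∑ i, (v i) ^ 2 ≤ ∑ _i : Fin n, ‖v‖ ^ 2 := by
          refine Finset.sum_le_sum fun i _ => ?_
          have := norm_le_pi_norm v i
          have h0 : |v i| ≤ ‖v‖ := by rwa [Real.norm_eq_abs] at this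
          calc (v i)^2 = |v i|^2 := (sq_abs _).symm
            _ ≤ ‖v‖^2 := by gcongr
      _ = n * ‖v‖ ^ 2 := by simp [Finset.sum_const, mul_comm]
  calc Real.sqrt (∑ i, (v i)^2) ≤ Real.sqrt (n * ‖v‖^2) := Real.sqrt_le_sqrt h1
    _ = Real.sqrt n * ‖v‖ := by
        rw [Real.sqrt_mul (Nat.cast_nonneg n), Real.sqrt_sq (norm_nonneg v)]

theorem KKL.charpoly_conj (n : ℕ) (P A : Matrix (Fin n) (Fin n) ℂ) (hP : IsUnit P) :
    (P * A * P⁻¹).charpoly = A.charpoly := by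
  have hdet : IsUnit P.det := (Matrix.isUnit_iff_isUnit_det P).mp hP
  have h1 : P * P⁻¹ = 1 := Matrix.mul_nonsing_inv P hdet
  have h2 : P⁻¹ * P = 1 := Matrix.nonsing_inv_mul P hdet
  have key : charmatrix (P * A * P⁻¹) =
      (P.map C) * charmatrix A * (P⁻¹.map C) := by
    unfold Matrix.charmatrix
    rw [Matrix.mul_sub, Matrix.sub_mul]
    congr 1
    · rw [← (Matrix.scalar_commute (X : ℂ[X]) (fun r => Commute.all _ _) (P.map C)).eq,
        Matrix.mul_assoc, ← Matrix.map_mul, h1]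
      simp
    · simp only [RingHom.mapMatrix_apply]
      rw [← Matrix.map_mul, ← Matrix.map_mul]
  rw [Matrix.charpoly, key, Matrix.det_mul, Matrix.det_mul, mul_comm, ← mul_assoc,
    ← Matrix.det_mul, ← Matrix.map_mul, h2]
  simp [Matrix.charpoly]

theorem KKL.norm_map_ofReal (n : ℕ) (A : Matrix (Fin n) (Fin n) ℝ) :
    ‖A.map (Complex.ofReal)‖ = ‖A‖ := by
  have h : ‖A.map (Complex.ofReal)‖₊ = ‖A‖₊ := by
    simp [Matrix.linfty_opNNNorm_def, Matrix.map_apply]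
  rw [← coe_nnnorm, ← coe_nnnorm, h]

theorem KKL.exp_norm_bound (n : ℕ) (D : Matrix (Fin n) (Fin n) ℝ)
    (P : Matrix (Fin n) (Fin n) ℂ) (d : Fin n → ℂ) (hP : IsUnit P)
    (hPD : D.map Complex.ofReal = P * diagonal d * P⁻¹) (a t : ℝ) (ht : 0 ≤ t)
    (hd : ∀ i, (d i).re ≤ -a) :
    ‖exp (t • D)‖ ≤ ‖P‖ * ‖P⁻¹‖ * Real.exp (-(a * t)) := by
  have hcont : Continuous (fun A : Matrix (Fin n) (Fin n) ℝ => A.map Complex.ofReal) :=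
    Continuous.matrix_map continuous_id Complex.continuous_ofReal
  have hmap : (exp (t • D)).map Complex.ofReal
      = exp ((t • D).map Complex.ofReal) :=
    map_exp (Complex.ofRealHom.mapMatrix :
      Matrix (Fin n) (Fin n) ℝ →+* Matrix (Fin n) (Fin n) ℂ) hcont (t • D)
  have hsmul : (t • D).map Complex.ofReal = t • (D.map Complex.ofReal) := by
    ext i j; simp [Complex.real_smul]
  have h3 : P * Matrix.diagonal (t • d) * P⁻¹ = t • (P * Matrix.diagonal d * P⁻¹) := by
    rw [Matrix.diagonal_smul, mul_smul_comm, smul_mul_assoc]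
  have hkey : exp (t • (D.map Complex.ofReal))
      = P * diagonal (fun i => Complex.exp (t * d i)) * P⁻¹ := by
    rw [hPD, ← h3, Matrix.exp_conj P _ hP, Matrix.exp_diagonal]
    have h5 : exp (t • d) = fun i => Complex.exp (t * d i) := by
      funext i
      rw [Pi.coe_exp, ← Complex.exp_eq_exp_ℂ]
      simp [Complex.real_smul]
    rw [h5]
  have hdn : ‖diagonal (fun i => Complex.exp (t * d i))‖ ≤ Real.exp (-(a * t)) := by
    rw [Matrix.linfty_opNorm_diagonal]
    refine (pi_norm_le_iff_of_nonneg (Real.exp_pos _).le).mpr fun i => ?_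
    rw [Complex.norm_exp]
    refine Real.exp_le_exp.mpr ?_
    have h4 : ((t : ℂ) * d i).re = t * (d i).re := by simp
    rw [h4]
    calc t * (d i).re ≤ t * (-a) := mul_le_mul_of_nonneg_left (hd i) ht
      _ = -(a * t) := by ring
  calc ‖exp (t • D)‖ = ‖(exp (t • D)).map Complex.ofReal‖ :=
        (KKL.norm_map_ofReal n _).symm
    _ = ‖P * diagonal (fun i => Complex.exp (t * d i)) * P⁻¹‖ := by rw [hmap, hsmul, hkey]
    _ ≤ ‖P * diagonal (fun i => Complex.exp (t * d i))‖ * ‖P⁻¹‖ := norm_mul_le _ _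
    _ ≤ ‖P‖ * ‖diagonal (fun i => Complex.exp (t * d i))‖ * ‖P⁻¹‖ := by
        gcongr; exact norm_mul_le _ _
    _ ≤ ‖P‖ * Real.exp (-(a * t)) * ‖P⁻¹‖ := by gcongr
    _ = ‖P‖ * ‖P⁻¹‖ * Real.exp (-(a * t)) := by ring

noncomputable def KKL.matCLM (n : ℕ) (M : Matrix (Fin n) (Fin n) ℝ) :
    (Fin n → ℝ) →L[ℝ] (Fin n → ℝ) :=
  LinearMap.toContinuousLinearMap M.mulVecLin

noncomputable def KKL.matRingHom (n : ℕ) :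
    Matrix (Fin n) (Fin n) ℝ →+* ((Fin n → ℝ) →L[ℝ] (Fin n → ℝ)) where
  toFun := KKL.matCLM n
  map_one' := by ext v i; simp [KKL.matCLM]
  map_mul' M N := by ext v i; simp [KKL.matCLM, Matrix.mulVec_mulVec]
  map_zero' := by ext v i; simp [KKL.matCLM]
  map_add' M N := by ext v i; simp [KKL.matCLM, Matrix.add_mulVec]

noncomputable def KKL.matLin (n : ℕ) :
    Matrix (Fin n) (Fin n) ℝ →ₗ[ℝ] ((Fin n → ℝ) →L[ℝ] (Fin n → ℝ)) where
  toFun := KKL.matCLM n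
  map_add' M N := by ext v i; simp [KKL.matCLM, Matrix.add_mulVec]
  map_smul' c M := by ext v i; simp [KKL.matCLM, Matrix.smul_mulVec]

theorem KKL.matCLM_cont (n : ℕ) : Continuous (KKL.matCLM n) :=
  (KKL.matLin n).continuous_of_finiteDimensional

theorem KKL.ode_sol (n : ℕ) (D : Matrix (Fin n) (Fin n) ℝ) (e : ℝ → Fin n → ℝ)
    (he : ∀ t, 0 ≤ t → HasDerivAt e (D.mulVec (e t)) t) :
    ∀ t, 0 ≤ t → e t = (exp (t • D)).mulVec (e 0) := by
  intro t ht
  set L := KKL.matCLM n D with hL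
  have hLapp : ∀ v, L v = D.mulVec v := fun v => rfl
  have hDeriv : ∀ s : ℝ, 0 ≤ s → HasDerivAt (fun u => exp ((-(u • L))) (e u)) 0 s := by
    intro s hs
    have h1 : HasDerivAt (fun u : ℝ => exp ((-(u • L))))
        (-(exp ((-(s • L))) * L)) s := by
      have := (hasDerivAt_exp_smul_const (𝕂 := ℝ) L (-s)).scomp s (hasDerivAt_neg s)
      simpa [Function.comp_def, neg_smul] using this
    have h2 : HasDerivAt e (D.mulVec (e s)) s := he s hs
    have h3 := h1.clm_apply h2
    have h4 : (-(exp ((-(s • L))) * L)) (e s)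
        + (exp ((-(s • L)))) (D.mulVec (e s)) = 0 := by
      rw [ContinuousLinearMap.neg_apply, ContinuousLinearMap.mul_apply, hLapp]
      simp
    rw [h4] at h3
    exact h3
  have hg : ∀ s ∈ Set.Ico (0:ℝ) t,
      HasDerivWithinAt (fun u => exp ((-(u • L))) (e u)) 0 (Set.Ici s) s :=
    fun s hs => (hDeriv s hs.1).hasDerivWithinAt
  have hcont : ContinuousOn (fun u => exp ((-(u • L))) (e u)) (Set.Icc 0 t) :=
    fun s hs => (hDeriv s hs.1).continuousAt.continuousWithinAt
  have hconst := constant_of_has_deriv_right_zero hcont hg t (Set.right_mem_Icc.mpr ht)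
  simp only [neg_zero, zero_smul, exp_zero, ContinuousLinearMap.one_apply] at hconst
  have hunit : exp (t • L) * exp ((-(t • L))) = 1 := by
    rw [← NormedSpace.exp_add_of_commute_of_mem_ball (𝕂 := ℝ) (Commute.neg_right (Commute.refl (t • L)))
      ((NormedSpace.expSeries_radius_eq_top ℝ ((Fin n → ℝ) →L[ℝ] (Fin n → ℝ))).symm ▸ edist_lt_top _ _)
      ((NormedSpace.expSeries_radius_eq_top ℝ ((Fin n → ℝ) →L[ℝ] (Fin n → ℝ))).symm ▸ edist_lt_top _ _), add_neg_cancel,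
      exp_zero]
  have : (exp (t • L)) ((exp ((-(t • L)))) (e t)) = (exp (t • L)) (e 0) := by
    rw [hconst]
  rw [← ContinuousLinearMap.mul_apply, hunit, ContinuousLinearMap.one_apply] at this
  rw [this]
  have h5 : KKL.matCLM n (t • D) = t • L := by
    rw [hL]; exact (KKL.matLin n).map_smul t D
  have h6 := map_exp (KKL.matRingHom n) (KKL.matCLM_cont n) (t • D)
  have h7 : (KKL.matRingHom n) (t • D) = t • L := h5
  rw [h7] at h6
  rw [← h6]
  rfl

end Aux
section Main

open NormedSpace Polynomial

attribute [local instance] Matrix.linftyOpNormedAddCommGroup Matrix.linftyOpNormedRing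
  Matrix.linftyOpNormedAlgebra

/-- **Exponential convergence of the KKL observer in the transformed coordinates.**
If `T` satisfies the observer PDE on `A`, `D` is diagonalizable over `ℂ` with complex
eigenvalues `λ₁, …, λ_{d_z}` all of negative real part, `x` solves `ẋ = f(x)` staying in
`A` and `z` solves `ż = D z + F h(x(t))`, then
`‖z(t) - T(x(t))‖ ≤ M ‖z(0) - T(x(0))‖ e^{-λ_min t}` for some `M > 0`, where
`λ_min = min_i |Re λ_i|`. -/
theorem observer_error_exponential_decay
    (dx dy dz : ℕ)
    (f : (Fin dx → ℝ) → Fin dx → ℝ) (h : (Fin dx → ℝ) → Fin dy → ℝ)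
    (hf : Continuous f) (hh : Continuous h)
    (D : Matrix (Fin dz) (Fin dz) ℝ) (lam : Fin dz → ℂ)
    (hlam : (D.map Complex.ofReal).charpoly = ∏ i, (Polynomial.X - Polynomial.C (lam i)))
    (hdiag : ∃ (P : Matrix (Fin dz) (Fin dz) ℂ) (d : Fin dz → ℂ),
        IsUnit P ∧ D.map Complex.ofReal = P * Matrix.diagonal d * P⁻¹)
    (hneg : ∀ i, (lam i).re < 0)
    (F : Matrix (Fin dz) (Fin dy) ℝ)
    (A : Set (Fin dx → ℝ))
    (T : (Fin dx → ℝ) → Fin dz → ℝ) (hT : Differentiable ℝ T)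
    (hPDE : ∀ x ∈ A, fderiv ℝ T x (f x) = D.mulVec (T x) + F.mulVec (h x))
    (x : ℝ → Fin dx → ℝ) (hx : ∀ t : ℝ, 0 ≤ t → HasDerivAt x (f (x t)) t)
    (hxA : ∀ t : ℝ, 0 ≤ t → x t ∈ A)
    (z : ℝ → Fin dz → ℝ)
    (hz : ∀ t : ℝ, 0 ≤ t → HasDerivAt z (D.mulVec (z t) + F.mulVec (h (x t))) t) :
    ∃ M : ℝ, 0 < M ∧ ∀ t : ℝ, 0 ≤ t →
      euclNorm (z t - T (x t)) ≤
        M * euclNorm (z 0 - T (x 0)) * Real.exp (-(⨅ i, |(lam i).re|) * t) := by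
  obtain ⟨P, d, hP, hPD⟩ := hdiag
  set a : ℝ := ⨅ i, |(lam i).re| with ha
  -- the error function and its ODE
  set e : ℝ → Fin dz → ℝ := fun t => z t - T (x t) with he'
  have he : ∀ t : ℝ, 0 ≤ t → HasDerivAt e (D.mulVec (e t)) t := by
    intro t ht
    have hTx : HasDerivAt (fun s => T (x s)) (fderiv ℝ T (x t) (f (x t))) t :=
      (hT (x t)).hasFDerivAt.comp_hasDerivAt t (hx t ht)
    rw [hPDE (x t) (hxA t ht)] at hTx
    have := (hz t ht).sub hTx
    have heq : (D.mulVec (z t) + F.mulVec (h (x t)))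
        - (D.mulVec (T (x t)) + F.mulVec (h (x t))) = D.mulVec (e t) := by
      rw [he']
      simp only [Matrix.mulVec_sub]
      abel
    rwa [heq] at this
  have hsol := KKL.ode_sol dz D e he
  -- eigenvalue bound
  have hd : ∀ i, (d i).re ≤ -a := by
    intro i
    have hcp : (Matrix.diagonal d).charpoly = ∏ j, (X - C (lam j)) := by
      rw [← KKL.charpoly_conj dz P (Matrix.diagonal d) hP, ← hPD, hlam]
    have hcpd : (Matrix.diagonal d).charpoly = ∏ j, (X - C (d j)) := by
      rw [Matrix.charpoly_of_upperTriangular _ (Matrix.blockTriangular_diagonal d)]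
      simp
    have hroot : (∏ j, ((d i : ℂ) - lam j)) = 0 := by
      have h0 : Polynomial.eval (d i) (∏ j, (X - C (d j))) = 0 := by
        rw [Polynomial.eval_prod]
        exact Finset.prod_eq_zero (Finset.mem_univ i) (by simp)
      rw [hcpd.symm.trans hcp] at h0
      rw [← h0, Polynomial.eval_prod]
      simp
    obtain ⟨j, _, hj⟩ := Finset.prod_eq_zero_iff.mp hroot
    have hij : d i = lam j := sub_eq_zero.mp hj
    have hmin : a ≤ |(lam j).re| := ciInf_le (Set.Finite.bddBelow (Set.finite_range _)) j
    rw [hij]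
    have : |(lam j).re| = -(lam j).re := abs_of_neg (hneg j)
    linarith
  -- assemble
  refine ⟨Real.sqrt dz * (‖P‖ * ‖P⁻¹‖) + 1, by positivity, fun t ht => ?_⟩
  rcases isEmpty_or_nonempty (Fin dz) with hempty | hne
  · have h0 : euclNorm (z t - T (x t)) = 0 := by
      rw [KKL.euclNorm_eq]; simp
    rw [h0]
    have h1 : euclNorm (z 0 - T (x 0)) = 0 := by
      rw [KKL.euclNorm_eq]; simp
    rw [h1]
    simp
  have key : euclNorm (e t) ≤
      (Real.sqrt dz * (‖P‖ * ‖P⁻¹‖)) * euclNorm (e 0) * Real.exp (-(a * t)) := by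
    calc euclNorm (e t) ≤ Real.sqrt dz * ‖e t‖ := KKL.euclNorm_le_norm _
      _ = Real.sqrt dz * ‖(exp (t • D)).mulVec (e 0)‖ := by rw [← hsol t ht]
      _ ≤ Real.sqrt dz * (‖exp (t • D)‖ * ‖e 0‖) := by
          gcongr
          exact Matrix.linfty_opNorm_mulVec _ _
      _ ≤ Real.sqrt dz * ((‖P‖ * ‖P⁻¹‖ * Real.exp (-(a * t))) * ‖e 0‖) := by
          gcongr
          exact KKL.exp_norm_bound dz D P d hP hPD a t ht hd
      _ ≤ Real.sqrt dz * ((‖P‖ * ‖P⁻¹‖ * Real.exp (-(a * t))) * euclNorm (e 0)) := by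
          gcongr
          exact KKL.norm_le_euclNorm _
      _ = (Real.sqrt dz * (‖P‖ * ‖P⁻¹‖)) * euclNorm (e 0) * Real.exp (-(a * t)) := by ring
  have hnn : 0 ≤ euclNorm (e 0) := by rw [KKL.euclNorm_eq]; positivity
  have hfin : euclNorm (e t) ≤
      (Real.sqrt dz * (‖P‖ * ‖P⁻¹‖) + 1) * euclNorm (e 0) * Real.exp (-(a * t)) := by
    refine key.trans ?_
    have hexp : (0:ℝ) < Real.exp (-(a * t)) := Real.exp_pos _
    nlinarith [mul_nonneg hnn hexp.le]
  calc euclNorm (z t - T (x t)) = euclNorm (e t) := rfl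
    _ ≤ (Real.sqrt dz * (‖P‖ * ‖P⁻¹‖) + 1) * euclNorm (e 0) * Real.exp (-(a * t)) := hfin
    _ = (Real.sqrt dz * (‖P‖ * ‖P⁻¹‖) + 1) * euclNorm (z 0 - T (x 0))
        * Real.exp (-a * t) := by rw [neg_mul]

end Main
end
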